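/- Let Φ : M_d(ℂ) → M_d(ℂ) be a quantum channel, H a Hermitian d×d matrix, E a real number at least the smallest eigenvalue of H, and δ ∈ [0,2]. Let Γ(E,δ) be the set of quadruples (P,Q,R,S) of d×d complex matrices satisfying: Q ⪰ 0, tr(Q) = 1, tr(HQ) ≤ E; Q + (δ/2)(R − S) ⪰ 0; tr(H(Q + (δ/2)(R − S))) ≤ E; R ⪰ 0, tr(R) = 1; S ⪰ 0, tr(S) = 1; and 0 ⪯ P ⪯ I. Then the Dobrushin curve of Φ with respect to H and E satisfies F_E(δ) = δ · sup{tr(P Φ(R − S)) : (P,Q,R,S) ∈ Γ(E,δ)}. -/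

import Mathlib

open scoped ComplexOrder

/-- The old `Matrix.PosSemidef.sqrt` (removed from Mathlib), with its original definition. -/
noncomputable def posSemidefSqrtOld {d : ℕ} {A : Matrix (Fin d) (Fin d) ℂ} (hA : A.PosSemidef) :
    Matrix (Fin d) (Fin d) ℂ :=
  hA.1.eigenvectorUnitary.1 * Matrix.diagonal ((↑) ∘ (√·) ∘ hA.1.eigenvalues) *
    (star hA.1.eigenvectorUnitary : Matrix (Fin d) (Fin d) ℂ)

/-- The trace norm `‖A‖₁ = tr √(A†A)` of a complex matrix. -/
noncomputable def traceNorm {d : ℕ} (A : Matrix (Fin d) (Fin d) ℂ) : ℝ :=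
  (posSemidefSqrtOld (Matrix.posSemidef_conjTranspose_mul_self A)).trace.re

/-- A density matrix: positive semidefinite with unit trace. -/
def IsDensity {d : ℕ} (ρ : Matrix (Fin d) (Fin d) ℂ) : Prop :=
  ρ.PosSemidef ∧ ρ.trace = 1

/-- The map `Φ ⊗ id_n` acting on `M_d(ℂ) ⊗ M_n(ℂ)`. -/
def stackMap {d : ℕ} (Φ : Matrix (Fin d) (Fin d) ℂ →ₗ[ℂ] Matrix (Fin d) (Fin d) ℂ) (n : ℕ)
    (M : Matrix (Fin d × Fin n) (Fin d × Fin n) ℂ) : Matrix (Fin d × Fin n) (Fin d × Fin n) ℂ :=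
  Matrix.of fun ia jb => Φ (Matrix.of fun i j => M (i, ia.2) (j, jb.2)) ia.1 jb.1

/-- A quantum channel: a completely positive trace-preserving linear map. -/
def IsCPTP {d : ℕ} (Φ : Matrix (Fin d) (Fin d) ℂ →ₗ[ℂ] Matrix (Fin d) (Fin d) ℂ) : Prop :=
  (∀ A, (Φ A).trace = A.trace) ∧
    ∀ (n : ℕ) (M : Matrix (Fin d × Fin n) (Fin d × Fin n) ℂ),
      M.PosSemidef → (stackMap Φ n M).PosSemidef

/-- The Dobrushin coefficient `η(Φ)`. -/
noncomputable def dobrushinCoeff {d : ℕ}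
    (Φ : Matrix (Fin d) (Fin d) ℂ →ₗ[ℂ] Matrix (Fin d) (Fin d) ℂ) : ℝ :=
  sSup {r | ∃ ρ₀ ρ₁ : Matrix (Fin d) (Fin d) ℂ, IsDensity ρ₀ ∧ IsDensity ρ₁ ∧ ρ₀ ≠ ρ₁ ∧
    r = traceNorm (Φ ρ₀ - Φ ρ₁) / traceNorm (ρ₀ - ρ₁)}

/-- The Dobrushin curve `F_E(δ)` of a map `Φ` with respect to the Hamiltonian `H` and the
energy bound `E`: the supremum of `‖Φ(ρ₀) − Φ(ρ₁)‖₁` over pairs of energy-constrained states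
at trace distance at most `δ`. -/
noncomputable def dobrushinCurve {d : ℕ}
    (Φ : Matrix (Fin d) (Fin d) ℂ → Matrix (Fin d) (Fin d) ℂ)
    (H : Matrix (Fin d) (Fin d) ℂ) (E δ : ℝ) : ℝ :=
  sSup {r | ∃ ρ₀ ρ₁ : Matrix (Fin d) (Fin d) ℂ, IsDensity ρ₀ ∧ IsDensity ρ₁ ∧
    ((ρ₀ * H).trace).re ≤ E ∧ ((ρ₁ * H).trace).re ≤ E ∧
    traceNorm (ρ₀ - ρ₁) ≤ δ ∧ r = traceNorm (Φ ρ₀ - Φ ρ₁)}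


open Matrix

namespace DobAux

variable {d : ℕ} {A : Matrix (Fin d) (Fin d) ℂ}

/-- Functional calculus: `U * diagonal g * U†` for the eigenvector unitary of `A`. -/
noncomputable def cd (hA : A.IsHermitian) (g : Fin d → ℝ) : Matrix (Fin d) (Fin d) ℂ :=
  (hA.eigenvectorUnitary : Matrix (Fin d) (Fin d) ℂ) *
    Matrix.diagonal (fun i => (g i : ℂ)) *
    star (hA.eigenvectorUnitary : Matrix (Fin d) (Fin d) ℂ)

lemma star_mul_self (hA : A.IsHermitian) :
    star (hA.eigenvectorUnitary : Matrix (Fin d) (Fin d) ℂ) *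
      (hA.eigenvectorUnitary : Matrix (Fin d) (Fin d) ℂ) = 1 :=
  Unitary.coe_star_mul_self _

lemma mul_star_self (hA : A.IsHermitian) :
    (hA.eigenvectorUnitary : Matrix (Fin d) (Fin d) ℂ) *
      star (hA.eigenvectorUnitary : Matrix (Fin d) (Fin d) ℂ) = 1 :=
  Unitary.coe_mul_star_self _

lemma cd_mul (hA : A.IsHermitian) (g₁ g₂ : Fin d → ℝ) :
    cd hA g₁ * cd hA g₂ = cd hA (fun i => g₁ i * g₂ i) := by
  unfold cd
  rw [Matrix.mul_assoc, Matrix.mul_assoc, ← Matrix.mul_assoc (star _), ← Matrix.mul_assoc (star _),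
    star_mul_self hA, Matrix.one_mul, ← Matrix.mul_assoc, ← Matrix.mul_assoc,
    Matrix.mul_assoc _ (Matrix.diagonal _) (Matrix.diagonal _), Matrix.diagonal_mul_diagonal]
  congr 2
  ext i
  push_cast
  ring

lemma cd_add (hA : A.IsHermitian) (g₁ g₂ : Fin d → ℝ) :
    cd hA g₁ + cd hA g₂ = cd hA (fun i => g₁ i + g₂ i) := by
  unfold cd
  rw [← Matrix.add_mul, ← Matrix.mul_add, Matrix.diagonal_add]
  congr 2
  ext i
  simp only [Pi.add_apply]
  push_cast
  ring

lemma cd_sub (hA : A.IsHermitian) (g₁ g₂ : Fin d → ℝ) :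
    cd hA g₁ - cd hA g₂ = cd hA (fun i => g₁ i - g₂ i) := by
  unfold cd
  rw [← Matrix.sub_mul, ← Matrix.mul_sub, Matrix.diagonal_sub]
  congr 2
  ext i
  simp only [Pi.sub_apply]
  push_cast
  ring

lemma cd_posSemidef (hA : A.IsHermitian) {g : Fin d → ℝ} (hg : ∀ i, 0 ≤ g i) :
    (cd hA g).PosSemidef := by
  unfold cd
  rw [Matrix.star_eq_conjTranspose]
  exact Matrix.PosSemidef.mul_mul_conjTranspose_same
    (Matrix.posSemidef_diagonal_iff.mpr fun i => by
      simpa using Complex.zero_le_real.mpr (hg i)) _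

lemma cd_isHermitian (hA : A.IsHermitian) (g : Fin d → ℝ) : (cd hA g).IsHermitian := by
  unfold cd
  rw [Matrix.star_eq_conjTranspose]
  apply Matrix.isHermitian_mul_mul_conjTranspose
  exact Matrix.isHermitian_diagonal_iff.mpr fun i => isSelfAdjoint_iff.mpr (Complex.conj_ofReal (g i))

lemma cd_trace (hA : A.IsHermitian) (g : Fin d → ℝ) :
    (cd hA g).trace = ∑ i, (g i : ℂ) := by
  unfold cd
  rw [Matrix.trace_mul_cycle, star_mul_self hA, Matrix.one_mul, Matrix.trace_diagonal]

lemma cd_trace_re (hA : A.IsHermitian) (g : Fin d → ℝ) :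
    ((cd hA g).trace).re = ∑ i, g i := by
  rw [cd_trace]
  simp

lemma cd_eigen (hA : A.IsHermitian) : cd hA hA.eigenvalues = A := by
  unfold cd
  conv_rhs => rw [hA.spectral_theorem]
  rfl

lemma cd_one (hA : A.IsHermitian) : cd hA (fun _ => 1) = 1 := by
  unfold cd
  have : Matrix.diagonal (fun _ : Fin d => ((1:ℝ) : ℂ)) = 1 := by
    simp
  rw [this, Matrix.mul_one, mul_star_self hA]

lemma eq_of_sq_eq_sq' {A B : Matrix (Fin d) (Fin d) ℂ} (hA : A.PosSemidef) (hB : B.PosSemidef)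
    (hAB : A ^ 2 = B ^ 2) : A = B := by
  by_contra h_ne
  obtain ⟨v, t, ht, hv, hv'⟩ :=
    (hA.1.sub hB.1).exists_eigenvector_of_ne_zero (sub_ne_zero.mpr h_ne)
  have h_sum : 0 = (t : ℂ) * (star v ⬝ᵥ A *ᵥ v + star v ⬝ᵥ B *ᵥ v) := calc
    0 = star v ⬝ᵥ (A ^ 2 - B ^ 2) *ᵥ v := by rw [hAB, sub_self, zero_mulVec, dotProduct_zero]
    _ = star v ⬝ᵥ A *ᵥ (A - B) *ᵥ v + star v ⬝ᵥ (A - B) *ᵥ B *ᵥ v := by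
      rw [mulVec_mulVec, mulVec_mulVec, ← dotProduct_add, ← add_mulVec, Matrix.mul_sub,
        Matrix.sub_mul, add_sub, sub_add_cancel, pow_two, pow_two]
    _ = (t : ℂ) * (star v ⬝ᵥ A *ᵥ v) + (star v) ᵥ* (A - B) ⬝ᵥ B *ᵥ v := by
      rw [hv', mulVec_smul, dotProduct_smul, RCLike.real_smul_eq_coe_mul,
        dotProduct_mulVec _ (A - B)]
      rfl
    _ = (t : ℂ) * (star v ⬝ᵥ A *ᵥ v + star v ⬝ᵥ B *ᵥ v) := by
      have hs : star v ᵥ* (A - B) = (t : ℂ) • star v := by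
        rw [← (hA.1.sub hB.1).eq, ← star_mulVec, hv']
        ext i
        simp
      rw [hs, smul_dotProduct, smul_eq_mul, mul_add]
  replace h_sum : star v ⬝ᵥ A *ᵥ v + star v ⬝ᵥ B *ᵥ v = 0 := by
    rw [eq_comm, ← mul_zero (t : ℂ)] at h_sum
    exact mul_left_cancel₀ (RCLike.ofReal_ne_zero.mpr ht) h_sum
  have h_van : star v ⬝ᵥ A *ᵥ v = 0 ∧ star v ⬝ᵥ B *ᵥ v = 0 := by
    refine ⟨le_antisymm ?_ (hA.dotProduct_mulVec_nonneg v),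
      le_antisymm ?_ (hB.dotProduct_mulVec_nonneg v)⟩
    · rw [add_comm, add_eq_zero_iff_eq_neg] at h_sum
      simpa only [h_sum, neg_nonneg] using hB.dotProduct_mulVec_nonneg v
    · simpa only [add_eq_zero_iff_eq_neg.mp h_sum, neg_nonneg] using hA.dotProduct_mulVec_nonneg v
  have aux : star v ⬝ᵥ (A - B) *ᵥ v = 0 := by
    rw [sub_mulVec, dotProduct_sub, h_van.1, h_van.2, sub_zero]
  rw [hv', dotProduct_smul, RCLike.real_smul_eq_coe_mul, ← mul_zero (t : ℂ)] at aux
  exact hv <| dotProduct_star_self_eq_zero.mp <| mul_left_cancel₀ (RCLike.ofReal_ne_zero.mpr ht) aux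

lemma sqrtOld_eq_cd (hA : A.PosSemidef) :
    posSemidefSqrtOld hA = cd hA.1 (fun i => √(hA.1.eigenvalues i)) := rfl

lemma posSemidef_sqrtOld (hA : A.PosSemidef) : (posSemidefSqrtOld hA).PosSemidef := by
  rw [sqrtOld_eq_cd]
  exact cd_posSemidef _ (fun i => Real.sqrt_nonneg _)

lemma sqrtOld_mul_self (hA : A.PosSemidef) : posSemidefSqrtOld hA * posSemidefSqrtOld hA = A := by
  rw [sqrtOld_eq_cd, cd_mul]
  conv_rhs => rw [← cd_eigen hA.1]
  congr 1
  funext i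
  exact Real.mul_self_sqrt (hA.eigenvalues_nonneg i)

lemma eq_sqrtOld_of_sq_eq {B : Matrix (Fin d) (Fin d) ℂ} (hB : B.PosSemidef) (hA : A.PosSemidef)
    (h : B ^ 2 = A) : B = posSemidefSqrtOld hA :=
  eq_of_sq_eq_sq' hB (posSemidef_sqrtOld hA) (by rw [h, sq, sqrtOld_mul_self])



lemma psd_trace_re_nonneg {M : Matrix (Fin d) (Fin d) ℂ} (hM : M.PosSemidef) :
    0 ≤ (M.trace).re := by
  rw [Matrix.trace]
  simp only [Complex.re_sum]
  apply Finset.sum_nonneg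
  intro i _
  have := hM.re_dotProduct_nonneg (Pi.single i 1)
  simpa [dotProduct, Matrix.mulVec, Pi.single_apply, Finset.sum_ite_eq,
    Matrix.diag] using this

lemma herm_trace_real {M : Matrix (Fin d) (Fin d) ℂ} (hM : M.IsHermitian) :
    ((M.trace).re : ℂ) = M.trace := by
  have h : star M.trace = M.trace := by
    rw [← Matrix.trace_conjTranspose, hM.eq]
  exact Complex.conj_eq_iff_re.mp h

lemma psd_eigen_nonneg {M : Matrix (Fin d) (Fin d) ℂ} (hM : M.PosSemidef) (i : Fin d) :
    0 ≤ hM.1.eigenvalues i := hM.eigenvalues_nonneg i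

lemma psd_trace_eq_zero {M : Matrix (Fin d) (Fin d) ℂ} (hM : M.PosSemidef)
    (h : (M.trace).re = 0) : M = 0 := by
  have h1 : M = cd hM.1 hM.1.eigenvalues := (cd_eigen hM.1).symm
  have h2 : ∑ i, hM.1.eigenvalues i = 0 := by
    rw [← cd_trace_re hM.1, ← h1, h]
  have h3 : ∀ i, hM.1.eigenvalues i = 0 := by
    intro i
    have := Finset.sum_eq_zero_iff_of_nonneg (fun j _ => hM.eigenvalues_nonneg j) |>.mp h2
    exact this i (Finset.mem_univ i)
  rw [h1]
  unfold cd
  have : (Matrix.diagonal fun i => ((hM.1.eigenvalues i : ℝ) : ℂ)) = 0 := by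
    simp [h3, Matrix.diagonal_zero]
  rw [this, Matrix.mul_zero, Matrix.zero_mul]

lemma trace_mul_re_nonneg {P B : Matrix (Fin d) (Fin d) ℂ} (hP : P.PosSemidef)
    (hB : B.PosSemidef) : 0 ≤ ((P * B).trace).re := by
  have hs := posSemidef_sqrtOld hB
  have h1 : P * B = P * (posSemidefSqrtOld hB * posSemidefSqrtOld hB) := by rw [sqrtOld_mul_self hB]
  have h2 : (P * (posSemidefSqrtOld hB * posSemidefSqrtOld hB)).trace = (posSemidefSqrtOld hB * P * posSemidefSqrtOld hB).trace := by
    rw [← Matrix.mul_assoc, Matrix.trace_mul_cycle]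
  have h3 : (posSemidefSqrtOld hB * P * posSemidefSqrtOld hB).PosSemidef := by
    have := hP.conjTranspose_mul_mul_same (posSemidefSqrtOld hB)
    rwa [hs.1.eq] at this
  rw [h1, h2]
  exact psd_trace_re_nonneg h3

lemma trace_mul_re_le {P B : Matrix (Fin d) (Fin d) ℂ} (hP : P.PosSemidef)
    (hP1 : (1 - P).PosSemidef) (hB : B.PosSemidef) :
    ((P * B).trace).re ≤ (B.trace).re := by
  have h := trace_mul_re_nonneg hP1 hB
  have h2 : (1 - P) * B = B - P * B := by rw [Matrix.sub_mul, Matrix.one_mul]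
  rw [h2, Matrix.trace_sub, Complex.sub_re] at h
  linarith

lemma cd_mul_A {A : Matrix (Fin d) (Fin d) ℂ} (hA : A.IsHermitian) (g : Fin d → ℝ) :
    cd hA g * A = cd hA (fun i => g i * hA.eigenvalues i) := by
  have h := cd_mul hA g hA.eigenvalues
  rwa [cd_eigen] at h

lemma trace_re_eq_sum {A : Matrix (Fin d) (Fin d) ℂ} (hA : A.IsHermitian) :
    (A.trace).re = ∑ i, hA.eigenvalues i := by
  have h := cd_trace_re hA hA.eigenvalues
  rwa [cd_eigen] at h

lemma herm_package {A : Matrix (Fin d) (Fin d) ℂ} (hA : A.IsHermitian) :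
    ∃ Ap An P : Matrix (Fin d) (Fin d) ℂ,
      Ap.PosSemidef ∧ An.PosSemidef ∧ A = Ap - An ∧
      P.PosSemidef ∧ (1 - P).PosSemidef ∧
      traceNorm A = (Ap.trace).re + (An.trace).re ∧
      ((P * A).trace).re = (Ap.trace).re ∧
      (A.trace).re = (Ap.trace).re - (An.trace).re := by
  set lam := hA.eigenvalues with hlam
  refine ⟨cd hA (fun i => max (lam i) 0), cd hA (fun i => max (-(lam i)) 0),
    cd hA (fun i => if 0 < lam i then 1 else 0),
    cd_posSemidef hA (fun i => le_max_right _ _),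
    cd_posSemidef hA (fun i => le_max_right _ _), ?_, ?_, ?_, ?_, ?_, ?_⟩
  · rw [cd_sub]
    have h : (fun i => max (lam i) 0 - max (-(lam i)) 0) = lam := by
      funext i
      rcases le_total 0 (lam i) with h | h
      · rw [max_eq_left h, max_eq_right (by linarith), sub_zero]
      · rw [max_eq_right h, max_eq_left (by linarith)]; ring
    rw [h, hlam, cd_eigen]
  · exact cd_posSemidef hA (fun i => by positivity)
  · rw [← cd_one hA, cd_sub]
    exact cd_posSemidef hA (fun i => by split <;> norm_num)
  · -- trace norm computation
    have habs : (cd hA (fun i => |lam i|)).PosSemidef :=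
      cd_posSemidef hA (fun i => abs_nonneg _)
    have hsq : (cd hA (fun i => |lam i|)) ^ 2 = Aᴴ * A := by
      rw [sq, cd_mul, hA.eq]
      conv_rhs => rw [← cd_eigen hA]
      rw [cd_mul]
      congr 1
      funext i
      simp [abs_mul_abs_self, hlam]
    have hsqrt := eq_sqrtOld_of_sq_eq habs (Matrix.posSemidef_conjTranspose_mul_self A) hsq
    rw [traceNorm, ← hsqrt, cd_trace_re, cd_trace_re, cd_trace_re, ← Finset.sum_add_distrib]
    congr 1
    funext i
    rcases le_total 0 (lam i) with h | h
    · rw [abs_of_nonneg h, max_eq_left h, max_eq_right (by linarith), add_zero]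
    · rw [abs_of_nonpos h, max_eq_right h, max_eq_left (by linarith), zero_add]
  · rw [cd_mul_A, cd_trace_re, cd_trace_re]
    congr 1
    funext i
    rcases lt_or_ge 0 (lam i) with h | h
    · rw [if_pos h, one_mul, max_eq_left h.le]
    · rw [if_neg (not_lt.mpr h), zero_mul, max_eq_right h]
  · rw [trace_re_eq_sum hA, cd_trace_re, cd_trace_re, ← Finset.sum_sub_distrib]
    congr 1
    funext i
    rcases le_total 0 (lam i) with h | h
    · rw [max_eq_left h, max_eq_right (by linarith), sub_zero]
    · rw [max_eq_right h, max_eq_left (by linarith)]; ring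

lemma traceNorm_nonneg (A : Matrix (Fin d) (Fin d) ℂ) : 0 ≤ traceNorm A :=
  psd_trace_re_nonneg (posSemidef_sqrtOld (Matrix.posSemidef_conjTranspose_mul_self A))

lemma traceNorm_zero : traceNorm (0 : Matrix (Fin d) (Fin d) ℂ) = 0 := by
  have h0 : (0 : Matrix (Fin d) (Fin d) ℂ).PosSemidef := Matrix.PosSemidef.zero
  have h := eq_sqrtOld_of_sq_eq h0
    (Matrix.posSemidef_conjTranspose_mul_self (0 : Matrix (Fin d) (Fin d) ℂ)) (by simp)
  rw [traceNorm, ← h, Matrix.trace_zero]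
  simp

lemma traceNorm_eq_zero {A : Matrix (Fin d) (Fin d) ℂ} (hA : A.IsHermitian)
    (h : traceNorm A = 0) : A = 0 := by
  obtain ⟨Ap, An, P, hp, hn, hsub, _, _, htn, _, _⟩ := herm_package hA
  have h1 : 0 ≤ (Ap.trace).re := psd_trace_re_nonneg hp
  have h2 : 0 ≤ (An.trace).re := psd_trace_re_nonneg hn
  have e1 : (Ap.trace).re = 0 := by linarith [htn ▸ h]
  have e2 : (An.trace).re = 0 := by linarith [htn ▸ h]
  rw [hsub, psd_trace_eq_zero hp e1, psd_trace_eq_zero hn e2, sub_zero]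

lemma psd_smul {c : ℝ} (hc : 0 ≤ c) {A : Matrix (Fin d) (Fin d) ℂ} (hA : A.PosSemidef) :
    ((c : ℂ) • A).PosSemidef := by
  constructor
  · rw [Matrix.IsHermitian, Matrix.conjTranspose_smul, hA.1.eq]
    congr 1
    simp [Complex.conj_ofReal]
  · intro x
    exact (hA.smul (a := (c : ℂ)) (Complex.zero_le_real.mpr hc)).2 x

lemma traceNorm_smul (c : ℝ) (hc : 0 ≤ c) (A : Matrix (Fin d) (Fin d) ℂ) :
    traceNorm ((c : ℂ) • A) = c * traceNorm A := by
  set B := posSemidefSqrtOld (Matrix.posSemidef_conjTranspose_mul_self A) with hB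
  have hBpsd : B.PosSemidef := posSemidef_sqrtOld (Matrix.posSemidef_conjTranspose_mul_self A)
  have hcB : ((c : ℂ) • B).PosSemidef := psd_smul hc hBpsd
  have hBB : B * B = Aᴴ * A := sqrtOld_mul_self (Matrix.posSemidef_conjTranspose_mul_self A)
  have hsq : ((c : ℂ) • B) ^ 2 = ((c : ℂ) • A)ᴴ * ((c : ℂ) • A) := by
    rw [sq, smul_mul_assoc, mul_smul_comm, Matrix.conjTranspose_smul, smul_mul_assoc,
      mul_smul_comm, hBB, smul_smul, smul_smul]
    congr 1
    simp [Complex.conj_ofReal]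
  have hsqrt := eq_sqrtOld_of_sq_eq hcB
    (Matrix.posSemidef_conjTranspose_mul_self ((c : ℂ) • A)) hsq
  rw [traceNorm, ← hsqrt, Matrix.trace_smul, traceNorm]
  simp [smul_eq_mul, Complex.re_ofReal_mul, hB]

/-- For Hermitian traceless `A` and `0 ⪯ P ⪯ 1`: `2 Re tr(PA) ≤ ‖A‖₁`. -/
lemma key_le {A : Matrix (Fin d) (Fin d) ℂ} (hA : A.IsHermitian) (hA0 : (A.trace).re = 0)
    {P : Matrix (Fin d) (Fin d) ℂ} (hP : P.PosSemidef) (hP1 : (1 - P).PosSemidef) :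
    2 * ((P * A).trace).re ≤ traceNorm A := by
  obtain ⟨Ap, An, _, hp, hn, hsub, _, _, htn, _, htr⟩ := herm_package hA
  have h1 : ((P * A).trace).re = ((P * Ap).trace).re - ((P * An).trace).re := by
    rw [hsub, Matrix.mul_sub, Matrix.trace_sub, Complex.sub_re]
  have h2 : ((P * Ap).trace).re ≤ (Ap.trace).re := trace_mul_re_le hP hP1 hp
  have h3 : 0 ≤ ((P * An).trace).re := trace_mul_re_nonneg hP hn
  rw [htn, h1]
  rw [hA0] at htr
  linarith

/-- For Hermitian traceless `A` there is `0 ⪯ P ⪯ 1` with `2 Re tr(PA) = ‖A‖₁`. -/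
lemma key_eq {A : Matrix (Fin d) (Fin d) ℂ} (hA : A.IsHermitian) (hA0 : (A.trace).re = 0) :
    ∃ P : Matrix (Fin d) (Fin d) ℂ, P.PosSemidef ∧ (1 - P).PosSemidef ∧
      2 * ((P * A).trace).re = traceNorm A := by
  obtain ⟨Ap, An, P, hp, hn, hsub, hPp, hP1, htn, hPA, htr⟩ := herm_package hA
  rw [hA0] at htr
  exact ⟨P, hPp, hP1, by rw [hPA, htn]; linarith⟩

lemma norm_diff_le_two {R S : Matrix (Fin d) (Fin d) ℂ} (hR : IsDensity R) (hS : IsDensity S) :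
    traceNorm (R - S) ≤ 2 := by
  have hH : (R - S).IsHermitian := hR.1.1.sub hS.1.1
  have htr : ((R - S).trace).re = 0 := by
    rw [Matrix.trace_sub, hR.2, hS.2]; simp
  obtain ⟨P, hP, hP1, hkey⟩ := key_eq hH htr
  have h1 : ((P * (R - S)).trace).re = ((P * R).trace).re - ((P * S).trace).re := by
    rw [Matrix.mul_sub, Matrix.trace_sub, Complex.sub_re]
  have h2 : ((P * R).trace).re ≤ (R.trace).re := trace_mul_re_le hP hP1 hR.1
  have h3 : 0 ≤ ((P * S).trace).re := trace_mul_re_nonneg hP hS.1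
  have h4 : (R.trace).re = 1 := by rw [hR.2]; simp
  rw [← hkey, h1]
  linarith

/-- The lift of a `d × d` matrix to `(d × 1) × (d × 1)`. -/
def lift1 {d : ℕ} (N : Matrix (Fin d) (Fin d) ℂ) :
    Matrix (Fin d × Fin 1) (Fin d × Fin 1) ℂ :=
  Matrix.of fun ia jb => N ia.1 jb.1

lemma lift1_posSemidef {N : Matrix (Fin d) (Fin d) ℂ} :
    N.PosSemidef ↔ (lift1 N).PosSemidef := by
  rw [posSemidef_iff_dotProduct_mulVec, posSemidef_iff_dotProduct_mulVec]
  constructor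
  · intro hN
    constructor
    · show (lift1 N)ᴴ = lift1 N
      ext ia jb
      have := congrFun (congrFun hN.1 ia.1) jb.1
      simpa [lift1, Matrix.conjTranspose_apply] using this
    · intro x
      have := hN.2 (fun i => x (i, 0))
      convert this using 2 <;>
      · simp only [dotProduct, Matrix.mulVec, lift1, Fintype.sum_prod_type,
          Fin.sum_univ_one, Matrix.of_apply, Pi.star_apply]
  · intro hN
    constructor
    · show Nᴴ = N
      ext i j
      have := congrFun (congrFun hN.1 (i, 0)) (j, 0)
      simpa [lift1, Matrix.conjTranspose_apply] using this
    · intro x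
      have := hN.2 (fun ia => x ia.1)
      convert this using 2 <;>
      · simp only [dotProduct, Matrix.mulVec, lift1, Fintype.sum_prod_type,
          Fin.sum_univ_one, Matrix.of_apply, Pi.star_apply]

lemma stackMap_lift1 {Φ : Matrix (Fin d) (Fin d) ℂ →ₗ[ℂ] Matrix (Fin d) (Fin d) ℂ}
    (A : Matrix (Fin d) (Fin d) ℂ) : stackMap Φ 1 (lift1 A) = lift1 (Φ A) := by
  ext ia jb
  rfl

lemma phi_pos {Φ : Matrix (Fin d) (Fin d) ℂ →ₗ[ℂ] Matrix (Fin d) (Fin d) ℂ} (hΦ : IsCPTP Φ)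
    {A : Matrix (Fin d) (Fin d) ℂ} (hA : A.PosSemidef) : (Φ A).PosSemidef := by
  rw [lift1_posSemidef, ← stackMap_lift1]
  exact hΦ.2 1 (lift1 A) (lift1_posSemidef.mp hA)

lemma phi_herm {Φ : Matrix (Fin d) (Fin d) ℂ →ₗ[ℂ] Matrix (Fin d) (Fin d) ℂ} (hΦ : IsCPTP Φ)
    {A : Matrix (Fin d) (Fin d) ℂ} (hA : A.IsHermitian) : (Φ A).IsHermitian := by
  obtain ⟨Ap, An, _, hp, hn, hsub, _⟩ := herm_package hA
  rw [hsub, map_sub]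
  exact ((phi_pos hΦ hp).1).sub ((phi_pos hΦ hn).1)

end DobAux

/-- The Dobrushin curve of a quantum channel as a jointly constrained semidefinite bilinear
program: `F_E(δ) = δ · sup {tr(P Φ(R − S)) : (P,Q,R,S) ∈ Γ(E,δ)}`. -/
theorem stmt_8 (d : ℕ) (hd : 0 < d)
    (Φ : Matrix (Fin d) (Fin d) ℂ →ₗ[ℂ] Matrix (Fin d) (Fin d) ℂ) (hΦ : IsCPTP Φ)
    (H : Matrix (Fin d) (Fin d) ℂ) (hH : H.IsHermitian)
    (E : ℝ) (hE : (⨅ i, hH.eigenvalues i) ≤ E)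
    (δ : ℝ) (hδ : δ ∈ Set.Icc (0 : ℝ) 2) :
    dobrushinCurve (⇑Φ) H E δ =
      δ * sSup {r | ∃ P Q R S : Matrix (Fin d) (Fin d) ℂ,
        Q.PosSemidef ∧ Q.trace = 1 ∧ ((H * Q).trace).re ≤ E ∧
        (Q + (((δ / 2 : ℝ) : ℂ)) • (R - S)).PosSemidef ∧
        ((H * (Q + (((δ / 2 : ℝ) : ℂ)) • (R - S))).trace).re ≤ E ∧
        R.PosSemidef ∧ R.trace = 1 ∧
        S.PosSemidef ∧ S.trace = 1 ∧
        P.PosSemidef ∧ (1 - P).PosSemidef ∧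
        r = ((P * Φ (R - S)).trace).re} := by
  open DobAux in
  obtain ⟨hδ0, hδ2⟩ := hδ
  -- a ground state with energy at most `E`
  have : Nonempty (Fin d) := ⟨⟨0, hd⟩⟩
  obtain ⟨i₀, hi₀⟩ : ∃ i, hH.eigenvalues i ≤ E := by
    obtain ⟨i, hi⟩ := exists_eq_ciInf_of_finite (f := hH.eigenvalues)
    exact ⟨i, hi ▸ hE⟩
  set ρg : Matrix (Fin d) (Fin d) ℂ := DobAux.cd hH (fun j => if j = i₀ then 1 else 0) with hρg
  have hρg_psd : ρg.PosSemidef := DobAux.cd_posSemidef hH (fun i => by positivity)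
  have hρg_tr : ρg.trace = 1 := by
    rw [hρg, DobAux.cd_trace]
    simp [apply_ite (Complex.ofReal)]
  have hρg_density : IsDensity ρg := ⟨hρg_psd, hρg_tr⟩
  have hρg_energy : ((ρg * H).trace).re ≤ E := by
    rw [hρg, DobAux.cd_mul_A hH, DobAux.cd_trace_re]
    simpa [ite_mul] using hi₀
  have hρg_energy' : ((H * ρg).trace).re ≤ E := by
    rwa [Matrix.trace_mul_comm]
  rw [dobrushinCurve]
  set Γ := {r | ∃ P Q R S : Matrix (Fin d) (Fin d) ℂ,
        Q.PosSemidef ∧ Q.trace = 1 ∧ ((H * Q).trace).re ≤ E ∧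
        (Q + (((δ / 2 : ℝ) : ℂ)) • (R - S)).PosSemidef ∧
        ((H * (Q + (((δ / 2 : ℝ) : ℂ)) • (R - S))).trace).re ≤ E ∧
        R.PosSemidef ∧ R.trace = 1 ∧
        S.PosSemidef ∧ S.trace = 1 ∧
        P.PosSemidef ∧ (1 - P).PosSemidef ∧
        r = ((P * Φ (R - S)).trace).re} with hΓ
  set L := {r | ∃ ρ₀ ρ₁ : Matrix (Fin d) (Fin d) ℂ, IsDensity ρ₀ ∧ IsDensity ρ₁ ∧
    ((ρ₀ * H).trace).re ≤ E ∧ ((ρ₁ * H).trace).re ≤ E ∧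
    traceNorm (ρ₀ - ρ₁) ≤ δ ∧ r = traceNorm (Φ ρ₀ - Φ ρ₁)} with hLs
  -- memberships of 0
  have h0L : (0 : ℝ) ∈ L := by
    refine ⟨ρg, ρg, hρg_density, hρg_density, hρg_energy, hρg_energy, ?_, ?_⟩
    · rw [sub_self, DobAux.traceNorm_zero]; exact hδ0
    · rw [sub_self, DobAux.traceNorm_zero]
  have h0Γ : (0 : ℝ) ∈ Γ := by
    refine ⟨0, ρg, ρg, ρg, hρg_psd, hρg_tr, hρg_energy', ?_, ?_, hρg_psd, hρg_tr, hρg_psd,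
      hρg_tr, Matrix.PosSemidef.zero, by simpa using Matrix.PosSemidef.one, by simp⟩
    · simpa using hρg_psd
    · simpa using hρg_energy'
  -- boundedness
  have hΓbdd : BddAbove Γ := by
    refine ⟨1, fun r hr => ?_⟩
    obtain ⟨P, Q, R, S, hQ, hQtr, hQE, hρ0psd, hρ0E, hR, hRtr, hS, hStr, hP, hP1, rfl⟩ := hr
    have h1 : ((P * Φ (R - S)).trace).re
        = ((P * Φ R).trace).re - ((P * Φ S).trace).re := by
      rw [map_sub, Matrix.mul_sub, Matrix.trace_sub, Complex.sub_re]
    have h2 : ((P * Φ R).trace).re ≤ ((Φ R).trace).re :=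
      DobAux.trace_mul_re_le hP hP1 (DobAux.phi_pos hΦ hR)
    have h3 : 0 ≤ ((P * Φ S).trace).re :=
      DobAux.trace_mul_re_nonneg hP (DobAux.phi_pos hΦ hS)
    have h4 : ((Φ R).trace).re = 1 := by rw [hΦ.1, hRtr]; simp
    rw [h1]
    linarith
  have hLbdd : BddAbove L := by
    refine ⟨2, fun r hr => ?_⟩
    obtain ⟨ρ₀, ρ₁, h0, h1, _, _, _, rfl⟩ := hr
    have e0 : IsDensity (Φ ρ₀) := ⟨DobAux.phi_pos hΦ h0.1, by rw [hΦ.1]; exact h0.2⟩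
    have e1 : IsDensity (Φ ρ₁) := ⟨DobAux.phi_pos hΦ h1.1, by rw [hΦ.1]; exact h1.2⟩
    exact DobAux.norm_diff_le_two e0 e1
  have hsΓ0 : (0 : ℝ) ≤ sSup Γ := le_csSup hΓbdd h0Γ
  have hsL0 : (0 : ℝ) ≤ sSup L := le_csSup hLbdd h0L
  apply le_antisymm
  · -- F ≤ δ · sup Γ
    apply csSup_le ⟨0, h0L⟩
    rintro r ⟨ρ₀, ρ₁, h0, h1, hE0, hE1, hdist, rfl⟩
    have hΔh : (ρ₀ - ρ₁).IsHermitian := h0.1.1.sub h1.1.1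
    have hΔtr : (ρ₀ - ρ₁).trace = 0 := by rw [Matrix.trace_sub, h0.2, h1.2, sub_self]
    by_cases hz : ρ₀ - ρ₁ = 0
    · have hzz : ρ₀ = ρ₁ := sub_eq_zero.mp hz
      rw [hzz, sub_self, DobAux.traceNorm_zero]
      exact mul_nonneg hδ0 hsΓ0
    · have ht_pos : 0 < traceNorm (ρ₀ - ρ₁) :=
        lt_of_le_of_ne (DobAux.traceNorm_nonneg _)
          (fun h => hz (DobAux.traceNorm_eq_zero hΔh h.symm))
      have hδpos : 0 < δ := lt_of_lt_of_le ht_pos hdist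
      obtain ⟨Dp, Dn, _, hDp, hDn, hΔsub, _, _, htn, _, htr⟩ := DobAux.herm_package hΔh
      have hΔtrre : ((ρ₀ - ρ₁).trace).re = 0 := by rw [hΔtr]; simp
      rw [hΔtrre] at htr
      set t := traceNorm (ρ₀ - ρ₁) with hts
      have hDpt : (Dp.trace).re = t / 2 := by linarith
      have hDnt : (Dn.trace).re = t / 2 := by linarith
      set c : ℝ := 2 / δ with hcs
      have hc0 : 0 ≤ c := by positivity
      have hκ0 : 0 ≤ 1 - c * (t / 2) := by
        have : c * (t / 2) = t / δ := by rw [hcs]; field_simp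
        rw [this]
        have := (div_le_one hδpos).mpr hdist
        linarith
      set R : Matrix (Fin d) (Fin d) ℂ :=
        (c : ℂ) • Dp + ((1 - c * (t / 2) : ℝ) : ℂ) • ρg with hRs
      set S : Matrix (Fin d) (Fin d) ℂ :=
        (c : ℂ) • Dn + ((1 - c * (t / 2) : ℝ) : ℂ) • ρg with hSs
      have hR_psd : R.PosSemidef :=
        (DobAux.psd_smul hc0 hDp).add (DobAux.psd_smul hκ0 hρg_psd)
      have hS_psd : S.PosSemidef :=
        (DobAux.psd_smul hc0 hDn).add (DobAux.psd_smul hκ0 hρg_psd)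
      have hDp_tr : Dp.trace = ((t / 2 : ℝ) : ℂ) := by
        rw [← DobAux.herm_trace_real hDp.1, hDpt]
      have hDn_tr : Dn.trace = ((t / 2 : ℝ) : ℂ) := by
        rw [← DobAux.herm_trace_real hDn.1, hDnt]
      have hR_tr : R.trace = 1 := by
        rw [hRs, Matrix.trace_add, Matrix.trace_smul, Matrix.trace_smul, hρg_tr, hDp_tr]
        push_cast [smul_eq_mul]
        ring
      have hS_tr : S.trace = 1 := by
        rw [hSs, Matrix.trace_add, Matrix.trace_smul, Matrix.trace_smul, hρg_tr, hDn_tr]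
        push_cast [smul_eq_mul]
        ring
      have hRS : R - S = (c : ℂ) • (ρ₀ - ρ₁) := by
        rw [hRs, hSs, add_sub_add_right_eq_sub, ← smul_sub, ← hΔsub]
      have hδc : (((δ / 2 : ℝ) : ℂ)) • (R - S) = ρ₀ - ρ₁ := by
        rw [hRS, smul_smul]
        have : ((δ / 2 : ℝ) : ℂ) * (c : ℂ) = 1 := by
          rw [hcs]
          push_cast
          field_simp
        rw [this, one_smul]
      have hBh : (Φ (ρ₀ - ρ₁)).IsHermitian := DobAux.phi_herm hΦ hΔh
      have hBtr : ((Φ (ρ₀ - ρ₁)).trace).re = 0 := by rw [hΦ.1, hΔtr]; simp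
      obtain ⟨P, hPp, hP1, hPkey⟩ := DobAux.key_eq hBh hBtr
      have hΦsub : Φ ρ₀ - Φ ρ₁ = Φ (ρ₀ - ρ₁) := (map_sub Φ ρ₀ ρ₁).symm
      have hval : ((P * Φ (R - S)).trace).re = traceNorm (Φ ρ₀ - Φ ρ₁) / δ := by
        have h1 : Φ (R - S) = (c : ℂ) • Φ (ρ₀ - ρ₁) := by
          rw [hRS]; exact Φ.map_smul _ _
        have h2 : ((P * ((c : ℂ) • Φ (ρ₀ - ρ₁))).trace).re
            = c * ((P * Φ (ρ₀ - ρ₁)).trace).re := by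
          rw [Matrix.mul_smul, Matrix.trace_smul, smul_eq_mul, Complex.re_ofReal_mul]
        rw [h1, h2, hΦsub, ← hPkey, hcs]
        field_simp
      have hmem : traceNorm (Φ ρ₀ - Φ ρ₁) / δ ∈ Γ := by
        refine ⟨P, ρ₁, R, S, h1.1, h1.2, by rwa [Matrix.trace_mul_comm], ?_, ?_,
          hR_psd, hR_tr, hS_psd, hS_tr, hPp, hP1, hval.symm⟩
        · rw [hδc, add_sub_cancel]
          exact h0.1
        · rw [hδc, add_sub_cancel, Matrix.trace_mul_comm]
          exact hE0
      calc traceNorm (Φ ρ₀ - Φ ρ₁) = δ * (traceNorm (Φ ρ₀ - Φ ρ₁) / δ) := by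
            field_simp
        _ ≤ δ * sSup Γ := mul_le_mul_of_nonneg_left (le_csSup hΓbdd hmem) hδ0
  · -- δ · sup Γ ≤ F
    rcases eq_or_lt_of_le hδ0 with hδz | hδpos
    · rw [← hδz, zero_mul]
      exact hsL0
    · have key : ∀ r ∈ Γ, r ≤ sSup L / δ := by
        rintro r ⟨P, Q, R, S, hQ, hQtr, hQE, hρ0psd, hρ0E, hR, hRtr, hS, hStr, hP, hP1, rfl⟩
        set ρ₀ : Matrix (Fin d) (Fin d) ℂ := Q + (((δ / 2 : ℝ) : ℂ)) • (R - S) with hρ₀s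
        have hρ₀tr : ρ₀.trace = 1 := by
          rw [hρ₀s, Matrix.trace_add, Matrix.trace_smul, Matrix.trace_sub, hRtr, hStr,
            sub_self, smul_zero, add_zero, hQtr]
        have hRSh : (R - S).IsHermitian := hR.1.sub hS.1
        have hRStr : ((R - S).trace) = 0 := by rw [Matrix.trace_sub, hRtr, hStr, sub_self]
        have hBh : (Φ (R - S)).IsHermitian := DobAux.phi_herm hΦ hRSh
        have hBtr : ((Φ (R - S)).trace).re = 0 := by rw [hΦ.1, hRStr]; simp
        have hδ20 : (0 : ℝ) ≤ δ / 2 := by linarith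
        have hsub : ρ₀ - Q = (((δ / 2 : ℝ) : ℂ)) • (R - S) := by
          rw [hρ₀s, add_sub_cancel_left]
        have hdist : traceNorm (ρ₀ - Q) ≤ δ := by
          rw [hsub, DobAux.traceNorm_smul _ hδ20]
          have := DobAux.norm_diff_le_two ⟨hR, hRtr⟩ ⟨hS, hStr⟩
          nlinarith
        have hΦsub : Φ ρ₀ - Φ Q = (((δ / 2 : ℝ) : ℂ)) • Φ (R - S) := by
          rw [hρ₀s, map_add, add_sub_cancel_left]
          exact Φ.map_smul _ _
        have hsmem : traceNorm (Φ ρ₀ - Φ Q) ∈ L :=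
          ⟨ρ₀, Q, ⟨hρ0psd, hρ₀tr⟩, ⟨hQ, hQtr⟩, by rwa [Matrix.trace_mul_comm] at hρ0E,
            by rwa [Matrix.trace_mul_comm] at hQE, hdist, rfl⟩
        have hkey := DobAux.key_le hBh hBtr hP hP1
        have hval : δ * ((P * Φ (R - S)).trace).re ≤ traceNorm (Φ ρ₀ - Φ Q) := by
          rw [hΦsub, DobAux.traceNorm_smul _ hδ20]
          nlinarith
        have := le_csSup hLbdd hsmem
        rw [le_div_iff₀ hδpos, mul_comm]
        linarith
      have h1 : sSup Γ ≤ sSup L / δ := csSup_le ⟨0, h0Γ⟩ key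
      calc δ * sSup Γ ≤ δ * (sSup L / δ) := mul_le_mul_of_nonneg_left h1 hδ0
        _ = sSup L := by field_simp
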